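/- Let B be an n×n real matrix whose off-diagonal entries satisfy B i j · B j i > 0 or B i j = B j i = 0 for all i ≠ j, and B i i = 0. Define B̄ by B̄ i j = sign(B i j) · sqrt(B i j · B j i). Then for every sequence of indices i₁,...,i_k with B(i₁,i₂)···B(i_{k-1},i_k)·B(i_k,i₁) equal to the corresponding reverse product B(i₁,i_k)···B(i₂,i₁), the product B(i₁,i₂)···B(i_k,i₁) equals B̄(i₁,i₂)···B̄(i_k,i₁). -/
import Mathlib


open Matrix

lemma sqrt_prod' {ι : Type*} (s : Finset ι) (f : ι → ℝ) (h : ∀ i ∈ s, 0 ≤ f i) :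
    ∏ i ∈ s, Real.sqrt (f i) = Real.sqrt (∏ i ∈ s, f i) := by
  induction s using Finset.cons_induction with
  | empty => simp
  | cons a s ha ih =>
    simp only [Finset.prod_cons]
    rw [ih (fun i hi => h i (Finset.mem_cons_of_mem hi)),
      Real.sqrt_mul (h a (Finset.mem_cons_self a s))]

lemma sign_mul_abs' (x : ℝ) : Real.sign x * |x| = x := by
  rcases lt_trichotomy x 0 with h | h | h
  · rw [Real.sign_of_neg h, abs_of_neg h]; ring
  · simp [h]
  · rw [Real.sign_of_pos h, abs_of_pos h, one_mul]

/- Statement 6: For B with zero diagonal satisfying condition C1, and B̄ the signed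
geometric-mean symmetrization B̄ i j = sign(B i j) * sqrt(B i j * B j i), every cyclic
product of B whose value equals that of the reversed cycle is preserved by passing to B̄. -/
theorem stmt_6 (n : ℕ) (B : Matrix (Fin n) (Fin n) ℝ)
    (hdiag : ∀ i, B i i = 0)
    (hC1 : ∀ i j : Fin n, i ≠ j → 0 < B i j * B j i ∨ (B i j = 0 ∧ B j i = 0)) :
    ∀ (k : ℕ) (v : Fin k → Fin n),
      (∏ j : Fin k, B (v j) (v (finRotate k j))) =
        (∏ j : Fin k, B (v (finRotate k j)) (v j)) →
      (∏ j : Fin k, B (v j) (v (finRotate k j))) =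
        ∏ j : Fin k, (Real.sign (B (v j) (v (finRotate k j))) *
          Real.sqrt (B (v j) (v (finRotate k j)) * B (v (finRotate k j)) (v j))) := by
  intro k v h
  by_cases hz : ∃ j : Fin k, B (v j) (v (finRotate k j)) = 0
  · obtain ⟨j, hj⟩ := hz
    rw [Finset.prod_eq_zero (Finset.mem_univ j) hj,
      Finset.prod_eq_zero (Finset.mem_univ j)]
    rw [hj, Real.sign_zero, zero_mul]
  · push_neg at hz
    -- each cross product is positive
    have hpos : ∀ j : Fin k, 0 < B (v j) (v (finRotate k j)) * B (v (finRotate k j)) (v j) := by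
      intro j
      have hne : v j ≠ v (finRotate k j) := by
        intro he
        exact hz j (he ▸ hdiag (v j))
      rcases hC1 _ _ hne with hp | ⟨h0, _⟩
      · exact hp
      · exact absurd h0 (hz j)
    rw [Finset.prod_mul_distrib,
      sqrt_prod' _ _ (fun j _ => (hpos j).le), Finset.prod_mul_distrib, ← h,
      ← sq, Real.sqrt_sq_eq_abs, Finset.abs_prod, ← Finset.prod_mul_distrib]
    exact (Finset.prod_congr rfl fun j _ => (sign_mul_abs' _).symm)
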